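/- arXiv:1509.00099 — 8 statements merged into one kernel-verified Lean document; each statement's English description precedes it below -/
import Mathlib

section
/- Let n ≥ 1 be a natural number, let x : Fin n → ℕ satisfy x i ≥ 1 for all i, let X = ∑ i, x i, and let ε : ℝ satisfy 0 < ε ≤ 1/X. Consider the vertex set V = Fin n ⊕ Fin 2, writing A and B for the two extra vertices, with the symmetric weight function w given by: w(A,B) = w(B,A) = 1; w(A,v_i) = w(v_i,A) = w(B,v_i) = w(v_i,B) = 2·(x i)/X − ε/n for each i; and all other weights 0. Then there exists a subset T of Fin n with 2·∑_{i ∈ T} x i = X if and only if (V, w) admits a valid weighted improper 2-coloring. -/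
open Finset

/-- A `k`-coloring `c` of a weighted digraph `(V, w)` is a valid weighted improper
coloring if every vertex has weighted indegree less than `1` from same-colored vertices. -/
def ValidWIC {V : Type*} [Fintype V] [DecidableEq V] {k : ℕ} (w : V → V → ℝ)
    (c : V → Fin k) : Prop :=
  ∀ v : V, ∑ u ∈ Finset.univ.filter (fun u => u ≠ v ∧ c u = c v), w u v < 1

theorem partition_iff_weighted_improper_two_coloring
    (n : ℕ) (hn : 1 ≤ n) (x : Fin n → ℕ) (hx : ∀ i, 1 ≤ x i)
    (X : ℕ) (hX : X = ∑ i, x i)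
    (ε : ℝ) (hε : 0 < ε) (hε' : ε ≤ 1 / (X : ℝ))
    (w : (Fin n ⊕ Fin 2) → (Fin n ⊕ Fin 2) → ℝ)
    (hw : ∀ u v, w u v =
      match u, v with
      | Sum.inr a, Sum.inr b => if a = b then 0 else 1
      | Sum.inr _, Sum.inl i => 2 * (x i : ℝ) / (X : ℝ) - ε / (n : ℝ)
      | Sum.inl i, Sum.inr _ => 2 * (x i : ℝ) / (X : ℝ) - ε / (n : ℝ)
      | Sum.inl _, Sum.inl _ => 0) :
    (∃ T : Finset (Fin n), 2 * ∑ i ∈ T, x i = X) ↔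
      ∃ c : (Fin n ⊕ Fin 2) → Fin 2, ValidWIC w c := by
  have hX1 : 1 ≤ X := by
    rw [hX]
    calc 1 ≤ n := hn
    _ = ∑ _i : Fin n, 1 := by simp
    _ ≤ ∑ i, x i := Finset.sum_le_sum fun i _ => hx i
  have hXR : (0:ℝ) < X := by exact_mod_cast Nat.lt_of_lt_of_le Nat.zero_lt_one hX1
  have hnR : (0:ℝ) < n := by exact_mod_cast hn
  have hεn : 0 < ε / n := div_pos hε hnR
  constructor
  · rintro ⟨T, hT⟩
    refine ⟨Sum.elim (fun i => if i ∈ T then 0 else 1) id, ?_⟩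
    have hsplit : ∑ i ∈ T, x i + ∑ i ∈ Tᶜ, x i = X := by
      rw [hX, Finset.sum_add_sum_compl]
    intro v
    match v with
    | Sum.inl i =>
      have h2 : 2 * x i ≤ X := by
        by_cases hi : i ∈ T
        · have := Finset.single_le_sum (f := x) (fun j _ => Nat.zero_le _) hi
          omega
        · have : i ∈ Tᶜ := Finset.mem_compl.2 hi
          have := Finset.single_le_sum (f := x) (fun j _ => Nat.zero_le _) this
          omega
      have hlt : 2 * (x i : ℝ) / (X : ℝ) - ε / n < 1 := by
        have : 2 * (x i : ℝ) / X ≤ 1 := by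
          rw [div_le_one hXR]
          exact_mod_cast h2
        linarith
      simp only [Finset.sum_filter, Fintype.sum_sum_type, Fin.sum_univ_two, hw]
      by_cases hi : i ∈ T <;> simp [hi, hlt]
    | Sum.inr a =>
      have hTne : T.Nonempty := by
        rw [← Finset.card_pos]
        by_contra h
        simp only [Finset.card_pos, Finset.not_nonempty_iff_eq_empty] at h
        rw [h] at hT
        simp at hT
        omega
      have hTcne : Tᶜ.Nonempty := by
        rw [← Finset.card_pos]
        by_contra h
        simp only [Finset.card_pos, Finset.not_nonempty_iff_eq_empty] at h
        have := Finset.card_add_card_compl T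
        rw [h] at hsplit
        simp at hsplit
        omega
      have key : ∀ S : Finset (Fin n), S.Nonempty → 2 * (∑ i ∈ S, x i) = X →
          ∑ i ∈ S, (2 * (x i : ℝ) / X - ε / n) < 1 := by
        intro S hS hSX
        rw [Finset.sum_sub_distrib, Finset.sum_const, nsmul_eq_mul]
        have h1 : ∑ i ∈ S, 2 * (x i : ℝ) / X = 1 := by
          rw [← Finset.sum_div, ← Finset.mul_sum]
          rw [div_eq_one_iff_eq (ne_of_gt hXR)]
          exact_mod_cast hSX
        have h2 : (0:ℝ) < S.card * (ε / n) := by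
          apply mul_pos _ hεn
          exact_mod_cast Finset.card_pos.2 hS
        linarith
      match a with
      | 0 =>
        have := key T hTne hT
        simp only [Finset.sum_filter, Fintype.sum_sum_type, Fin.sum_univ_two, hw]
        simpa [Finset.sum_ite_mem, Finset.sum_filter] using this
      | 1 =>
        have hTc : 2 * ∑ i ∈ Tᶜ, x i = X := by omega
        have := key Tᶜ hTcne hTc
        have hset : Finset.univ.filter (fun j => j ∉ T) = Tᶜ := by ext j; simp
        rw [← hset, Finset.sum_filter] at this
        simp only [Finset.sum_filter, Fintype.sum_sum_type, Fin.sum_univ_two, hw]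
        simpa [ite_not] using this
  · rintro ⟨c, hc⟩
    -- all weights are nonnegative
    have hεX : ε / n ≤ 1 / (X : ℝ) := by
      calc ε / n ≤ ε / 1 := by
            apply div_le_div_of_nonneg_left hε.le one_pos
            exact_mod_cast hn
      _ = ε := div_one ε
      _ ≤ 1 / X := hε'
    have hkey : ∀ i : Fin n, (0:ℝ) ≤ 2 * (x i : ℝ) / X - ε / n := by
      intro i
      have h1 : (1:ℝ) ≤ x i := by exact_mod_cast hx i
      have h2 : (1:ℝ) / X ≤ 2 * (x i : ℝ) / X := by
        gcongr
        linarith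
      linarith
    have hw0 : ∀ u v, 0 ≤ w u v := by
      intro u v
      rw [hw]
      split
      · split <;> norm_num
      · exact hkey _
      · exact hkey _
      · norm_num
    -- A and B get different colors
    have hAB : c (Sum.inr 0) ≠ c (Sum.inr 1) := by
      intro heq
      have h1 := hc (Sum.inr 1)
      have hmem : (Sum.inr 0 : Fin n ⊕ Fin 2) ∈
          Finset.univ.filter (fun u => u ≠ Sum.inr 1 ∧ c u = c (Sum.inr 1)) := by
        simp [heq]
      have w01 : w (Sum.inr 0) (Sum.inr 1) = 1 := by rw [hw]; norm_num
      have hle : (1:ℝ) ≤ ∑ u ∈ Finset.univ.filter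
          (fun u => u ≠ Sum.inr 1 ∧ c u = c (Sum.inr 1)), w u (Sum.inr 1) := by
        calc (1:ℝ) = w (Sum.inr 0) (Sum.inr 1) := w01.symm
        _ ≤ _ := Finset.single_le_sum (f := fun u => w u (Sum.inr 1))
              (fun u _ => hw0 u _) hmem
      linarith
    -- key arithmetic lemma
    have key2 : ∀ S : Finset (Fin n),
        (∑ j ∈ S, (2 * (x j : ℝ) / X - ε / n)) < 1 → 2 * ∑ j ∈ S, x j ≤ X := by
      intro S hS
      rw [Finset.sum_sub_distrib, Finset.sum_const, nsmul_eq_mul] at hS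
      have hcard : (S.card : ℝ) * (ε / n) ≤ 1 / X := by
        have h1 : (S.card : ℝ) ≤ n := by
          have := Finset.card_le_univ S
          have : S.card ≤ n := by simpa using this
          exact_mod_cast this
        calc (S.card : ℝ) * (ε / n) ≤ n * (ε / n) :=
              mul_le_mul_of_nonneg_right h1 hεn.le
        _ = ε := by field_simp
        _ ≤ 1 / X := hε'
      have hsum : ∑ j ∈ S, 2 * (x j : ℝ) / X = 2 * (∑ j ∈ S, (x j : ℝ)) / X := by
        rw [Finset.mul_sum, Finset.sum_div]
      rw [hsum] at hS
      have hdiv : 2 * (∑ j ∈ S, (x j : ℝ)) / X < 1 + 1 / X := by linarith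
      have hmul : 2 * (∑ j ∈ S, (x j : ℝ)) < (1 + 1 / X) * X := by
        exact (div_lt_iff₀ hXR).mp hdiv
      have hXX : (1 + 1 / (X:ℝ)) * X = X + 1 := by field_simp
      rw [hXX] at hmul
      have : 2 * (∑ j ∈ S, x j) < X + 1 := by exact_mod_cast hmul
      omega
    set T0 : Finset (Fin n) := Finset.univ.filter (fun j => c (Sum.inl j) = c (Sum.inr 0))
      with hT0
    set T1 : Finset (Fin n) := Finset.univ.filter (fun j => c (Sum.inl j) = c (Sum.inr 1))
      with hT1
    have hsum0 : ∑ u ∈ Finset.univ.filter (fun u => u ≠ Sum.inr 0 ∧ c u = c (Sum.inr 0)),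
        w u (Sum.inr 0) = ∑ j ∈ T0, (2 * (x j : ℝ) / X - ε / n) := by
      rw [hT0, Finset.sum_filter, Finset.sum_filter]
      simp only [Fintype.sum_sum_type, Fin.sum_univ_two, hw]
      simp [Ne.symm hAB]
    have hsum1 : ∑ u ∈ Finset.univ.filter (fun u => u ≠ Sum.inr 1 ∧ c u = c (Sum.inr 1)),
        w u (Sum.inr 1) = ∑ j ∈ T1, (2 * (x j : ℝ) / X - ε / n) := by
      rw [hT1, Finset.sum_filter, Finset.sum_filter]
      simp only [Fintype.sum_sum_type, Fin.sum_univ_two, hw]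
      simp [hAB]
    have h0 : 2 * ∑ j ∈ T0, x j ≤ X := by
      apply key2
      rw [← hsum0]
      exact hc (Sum.inr 0)
    have h1 : 2 * ∑ j ∈ T1, x j ≤ X := by
      apply key2
      rw [← hsum1]
      exact hc (Sum.inr 1)
    have hcompl : T1 = T0ᶜ := by
      have htwo : ∀ a b y : Fin 2, a ≠ b → (y = b ↔ ¬ y = a) := by decide
      ext j
      simp [hT0, hT1, htwo _ _ _ hAB]
    have hsplit : ∑ j ∈ T0, x j + ∑ j ∈ T1, x j = X := by
      rw [hcompl, hX, Finset.sum_add_sum_compl]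
    exact ⟨T0, by omega⟩
end

section
/- Let (V, w) be a weighted digraph with a symmetric weight function (w u v = w v u for all u, v) such that w u v < 1 for all u, v, and such that every vertex v has at most 3 neighbors, i.e. the set {u | w u v > 0} has at most 3 elements. Then (V, w) admits a valid weighted improper 2-coloring; in particular its weighted improper chromatic number is at most 2. -/
open Finset

section Aux

variable {V : Type*} [Fintype V] [DecidableEq V]

/-- Same-color weighted indegree at a vertex. -/
noncomputable def Scol (w : V → V → ℝ) (c : V → Fin 2) (v : V) : ℝ :=
  ∑ u ∈ Finset.univ.filter (fun u => u ≠ v ∧ c u = c v), w u v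

/-- Total monochromatic weight. -/
noncomputable def MonoW (w : V → V → ℝ) (c : V → Fin 2) : ℝ := ∑ v, Scol w c v

lemma fin2_eq_add_one_iff : ∀ a b : Fin 2, (a = b + 1 ↔ a ≠ b) := by decide

lemma scol_eq (w : V → V → ℝ) (c : V → Fin 2) (v : V) :
    Scol w c v = ∑ u : V, if u ≠ v ∧ c u = c v then w u v else 0 := by
  rw [Scol, Finset.sum_filter]

/-- Decomposition of the total monochromatic weight isolating a vertex `v₀`. -/
lemma monoW_eq (w : V → V → ℝ) (hsym : ∀ u v, w u v = w v u)
    (c : V → Fin 2) (v₀ : V) :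
    MonoW w c = 2 * Scol w c v₀ +
      ∑ v ∈ Finset.univ.erase v₀,
        ∑ u ∈ Finset.univ.erase v₀, if u ≠ v ∧ c u = c v then w u v else 0 := by
  have h0 : MonoW w c = Scol w c v₀ + ∑ v ∈ Finset.univ.erase v₀, Scol w c v := by
    rw [MonoW, ← Finset.add_sum_erase _ _ (Finset.mem_univ v₀)]
  have h1 : ∀ v ∈ Finset.univ.erase v₀,
      Scol w c v = (if v₀ ≠ v ∧ c v₀ = c v then w v₀ v else 0) +
        ∑ u ∈ Finset.univ.erase v₀, if u ≠ v ∧ c u = c v then w u v else 0 := by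
    intro v hv
    rw [scol_eq, ← Finset.add_sum_erase _ _ (Finset.mem_univ v₀)]
  have h2 : ∑ v ∈ Finset.univ.erase v₀,
      (if v₀ ≠ v ∧ c v₀ = c v then w v₀ v else 0) = Scol w c v₀ := by
    rw [scol_eq, ← Finset.add_sum_erase _ _ (Finset.mem_univ v₀)]
    simp only [ne_eq, not_true_eq_false, false_and, if_false, zero_add]
    apply Finset.sum_congr rfl
    intro u hu
    have hu' : u ≠ v₀ := Finset.ne_of_mem_erase hu
    have : (v₀ ≠ u ∧ c v₀ = c u) ↔ (u ≠ v₀ ∧ c u = c v₀) := by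
      constructor <;> rintro ⟨h1, h2⟩ <;> exact ⟨h1.symm, h2.symm⟩
    rw [hsym v₀ u]
    by_cases h : u ≠ v₀ ∧ c u = c v₀
    · rw [if_pos (this.mpr h), if_pos h]
    · rw [if_neg (fun hh => h (this.mp hh)), if_neg h]
  rw [h0, Finset.sum_congr rfl h1, Finset.sum_add_distrib, h2]
  ring

end Aux

theorem subcubic_weights_lt_one_two_colorable {V : Type*} [Fintype V] [DecidableEq V]
    (w : V → V → ℝ)
    (hw0 : ∀ u v, 0 ≤ w u v) (hwd : ∀ v, w v v = 0)
    (hsym : ∀ u v, w u v = w v u)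
    (hlt : ∀ u v, w u v < 1)
    (hdeg : ∀ v : V, (Finset.univ.filter (fun u => 0 < w u v)).card ≤ 3) :
    ∃ c : V → Fin 2, ValidWIC w c := by
  obtain ⟨c, -, hmin⟩ := Finset.exists_min_image (Finset.univ : Finset (V → Fin 2))
    (MonoW w) ⟨fun _ => 0, Finset.mem_univ _⟩
  refine ⟨c, fun v₀ => ?_⟩
  set c' : V → Fin 2 := Function.update c v₀ (c v₀ + 1) with hc'
  have hc'v₀ : c' v₀ = c v₀ + 1 := Function.update_self _ _ _
  have hc'ne : ∀ u, u ≠ v₀ → c' u = c u := fun u hu => Function.update_of_ne hu _ _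
  -- the "rest" term is the same for c and c'
  have hrest : (∑ v ∈ Finset.univ.erase v₀, ∑ u ∈ Finset.univ.erase v₀,
        if u ≠ v ∧ c' u = c' v then w u v else 0) =
      ∑ v ∈ Finset.univ.erase v₀, ∑ u ∈ Finset.univ.erase v₀,
        if u ≠ v ∧ c u = c v then w u v else 0 := by
    apply Finset.sum_congr rfl; intro v hv
    apply Finset.sum_congr rfl; intro u hu
    rw [hc'ne u (Finset.ne_of_mem_erase hu), hc'ne v (Finset.ne_of_mem_erase hv)]
  have hM := hmin c' (Finset.mem_univ _)
  have h1 := monoW_eq w hsym c v₀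
  have h2 := monoW_eq w hsym c' v₀
  have key : Scol w c v₀ ≤ Scol w c' v₀ := by
    rw [h1, h2, hrest] at hM; linarith
  -- Scol w c' v₀ is the other-color weight
  have hO : Scol w c' v₀ =
      ∑ u ∈ Finset.univ.filter (fun u => u ≠ v₀ ∧ c u ≠ c v₀), w u v₀ := by
    rw [Scol]
    apply Finset.sum_congr _ (fun _ _ => rfl)
    apply Finset.filter_congr
    intro u _
    by_cases hu : u = v₀
    · subst hu; simp
    · rw [hc'ne u hu, hc'v₀]
      simp only [hu, ne_eq, not_false_eq_true, true_and]
      exact fin2_eq_add_one_iff _ _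
  rw [hO] at key
  -- Now the counting argument
  set N := Finset.univ.filter (fun u => 0 < w u v₀) with hN
  set P := Finset.univ.filter (fun u => u ≠ v₀ ∧ c u = c v₀) with hP
  set Q := Finset.univ.filter (fun u => u ≠ v₀ ∧ c u ≠ c v₀) with hQ
  have hPsum : ∑ u ∈ P, w u v₀ = ∑ u ∈ P ∩ N, w u v₀ := by
    refine (Finset.sum_subset Finset.inter_subset_left ?_).symm
    intro u hu hnu
    have : ¬ (0 < w u v₀) := by
      intro h
      exact hnu (Finset.mem_inter.mpr ⟨hu, Finset.mem_filter.mpr ⟨Finset.mem_univ _, h⟩⟩)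
    linarith [hw0 u v₀]
  have hQsum : ∑ u ∈ Q, w u v₀ = ∑ u ∈ Q ∩ N, w u v₀ := by
    refine (Finset.sum_subset Finset.inter_subset_left ?_).symm
    intro u hu hnu
    have : ¬ (0 < w u v₀) := by
      intro h
      exact hnu (Finset.mem_inter.mpr ⟨hu, Finset.mem_filter.mpr ⟨Finset.mem_univ _, h⟩⟩)
    linarith [hw0 u v₀]
  have small_sum : ∀ s : Finset V, s.card ≤ 1 → ∑ u ∈ s, w u v₀ < 1 := by
    intro s hs
    interval_cases h : s.card
    · rw [Finset.card_eq_zero.mp h, Finset.sum_empty]; norm_num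
    · obtain ⟨a, ha⟩ := Finset.card_eq_one.mp h
      rw [ha, Finset.sum_singleton]; exact hlt a v₀
  show ∑ u ∈ P, w u v₀ < 1
  by_cases hcard : (P ∩ N).card ≤ 1
  · rw [hPsum]; exact small_sum _ hcard
  · -- then Q ∩ N has at most 1 element
    have hdisj : Disjoint (P ∩ N) (Q ∩ N) := by
      rw [Finset.disjoint_left]
      intro u huP huQ
      have h1 := (Finset.mem_filter.mp (Finset.mem_inter.mp huP).1).2
      have h2 := (Finset.mem_filter.mp (Finset.mem_inter.mp huQ).1).2
      exact h2.2 h1.2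
    have hsub : (P ∩ N) ∪ (Q ∩ N) ⊆ N := by
      intro u hu
      rcases Finset.mem_union.mp hu with h | h
      · exact (Finset.mem_inter.mp h).2
      · exact (Finset.mem_inter.mp h).2
    have hcards : (P ∩ N).card + (Q ∩ N).card ≤ 3 := by
      rw [← Finset.card_union_of_disjoint hdisj]
      exact le_trans (Finset.card_le_card hsub) (hdeg v₀)
    have hQcard : (Q ∩ N).card ≤ 1 := by omega
    calc ∑ u ∈ P, w u v₀ ≤ ∑ u ∈ Q, w u v₀ := key
      _ = ∑ u ∈ Q ∩ N, w u v₀ := hQsum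
      _ < 1 := small_sum _ hQcard
end

section
/- Let (V, w) be a weighted digraph with a symmetric weight function (w u v = w v u for all u, v), let G be the underlying simple graph on V with u adjacent to v iff u ≠ v and w u v > 0, and let w_min : ℝ satisfy w_min > 0 and w_min ≤ w u v whenever w u v > 0. Let d : ℕ satisfy (d+1)·w_min ≥ 1. If c : V → Fin k is a valid weighted improper coloring of (V, w), then the chromatic number of G is at most (d+1)·k. In particular, the chromatic number of G is at most (d+1) times the weighted improper chromatic number of (V, w). -/
open Finset

/-- Greedy coloring: a finite graph with all degrees ≤ d is (d+1)-colorable (on a finset). -/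
lemma greedy_aux {V : Type*} [Fintype V] [DecidableEq V] (G : SimpleGraph V)
    [DecidableRel G.Adj] (d : ℕ)
    (hdeg : ∀ v, (Finset.univ.filter (fun u => G.Adj v u)).card ≤ d) (s : Finset V) :
    ∃ f : V → Fin (d + 1), ∀ u ∈ s, ∀ v ∈ s, G.Adj u v → f u ≠ f v := by
  classical
  induction s using Finset.induction_on with
  | empty => exact ⟨fun _ => 0, by simp⟩
  | @insert a s ha ih =>
    obtain ⟨f, hf⟩ := ih
    have hcard : ((s.filter (fun u => G.Adj a u)).image f).card < d + 1 := by
      calc ((s.filter (fun u => G.Adj a u)).image f).card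
          ≤ (s.filter (fun u => G.Adj a u)).card := Finset.card_image_le
        _ ≤ (Finset.univ.filter (fun u => G.Adj a u)).card :=
            Finset.card_le_card (Finset.filter_subset_filter _ (Finset.subset_univ s))
        _ ≤ d := hdeg a
        _ < d + 1 := Nat.lt_succ_self d
    have hex : ∃ x : Fin (d + 1), x ∉ (s.filter (fun u => G.Adj a u)).image f := by
      by_contra h
      push_neg at h
      have : ((s.filter (fun u => G.Adj a u)).image f) = Finset.univ :=
        Finset.eq_univ_iff_forall.mpr h
      rw [this] at hcard
      simp [Finset.card_univ] at hcard
    obtain ⟨x, hx⟩ := hex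
    refine ⟨Function.update f a x, ?_⟩
    intro u hu v hv huv
    rcases Finset.mem_insert.mp hu with rfl | hu' <;>
      rcases Finset.mem_insert.mp hv with rfl | hv'
    · exact absurd huv (G.irrefl)
    · rw [Function.update_self, Function.update_of_ne (by rintro rfl; exact ha hv')]
      intro h
      exact hx (Finset.mem_image.mpr ⟨v, Finset.mem_filter.mpr ⟨hv', huv⟩, h.symm⟩)
    · rw [Function.update_self, Function.update_of_ne (by rintro rfl; exact ha hu')]
      intro h
      exact hx (Finset.mem_image.mpr ⟨u, Finset.mem_filter.mpr ⟨hu', huv.symm⟩, h⟩)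
    · rw [Function.update_of_ne (by rintro rfl; exact ha hu'),
        Function.update_of_ne (by rintro rfl; exact ha hv')]
      exact hf u hu' v hv' huv

theorem chromatic_le_of_weighted_improper {V : Type*} [Fintype V] [DecidableEq V]
    (w : V → V → ℝ)
    (hw0 : ∀ u v, 0 ≤ w u v) (hwd : ∀ v, w v v = 0)
    (hsym : ∀ u v, w u v = w v u)
    (G : SimpleGraph V) (hG : ∀ u v, G.Adj u v ↔ u ≠ v ∧ 0 < w u v)
    (wmin : ℝ) (hmin0 : 0 < wmin) (hmin : ∀ u v, 0 < w u v → wmin ≤ w u v)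
    (d : ℕ) (hd : 1 ≤ (d + 1 : ℝ) * wmin)
    (k : ℕ) (c : V → Fin k) (hc : ValidWIC w c) :
    G.chromaticNumber ≤ ((d + 1) * k : ℕ) := by
  classical
  -- subgraph on same-colored vertices
  let G' : SimpleGraph V :=
    { Adj := fun u v => G.Adj u v ∧ c u = c v
      symm := ⟨fun u v h => ⟨h.1.symm, h.2.symm⟩⟩
      loopless := ⟨fun v h => G.irrefl h.1⟩ }
  have hdeg : ∀ v, (Finset.univ.filter (fun u => G'.Adj v u)).card ≤ d := by
    intro v
    set N := Finset.univ.filter (fun u => G'.Adj v u) with hN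
    have hsub : N ⊆ Finset.univ.filter (fun u => u ≠ v ∧ c u = c v) := by
      intro u hu
      simp only [hN, Finset.mem_filter, Finset.mem_univ, true_and] at hu ⊢
      exact ⟨(G.ne_of_adj hu.1).symm, hu.2.symm⟩
    have hlb : (N.card : ℝ) * wmin ≤ ∑ u ∈ N, w u v := by
      calc (N.card : ℝ) * wmin = ∑ _u ∈ N, wmin := by
              rw [Finset.sum_const, nsmul_eq_mul]
        _ ≤ ∑ u ∈ N, w u v := by
              apply Finset.sum_le_sum
              intro u hu
              simp only [hN, Finset.mem_filter, Finset.mem_univ, true_and] at hu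
              have hpos : 0 < w v u := ((hG v u).mp hu.1).2
              rw [hsym v u] at hpos
              exact hmin u v hpos
    have hub : ∑ u ∈ N, w u v ≤ ∑ u ∈ Finset.univ.filter (fun u => u ≠ v ∧ c u = c v), w u v :=
      Finset.sum_le_sum_of_subset_of_nonneg hsub (fun u _ _ => hw0 u v)
    have hlt : (N.card : ℝ) * wmin < (d + 1 : ℝ) * wmin :=
      lt_of_le_of_lt (hlb.trans hub) (lt_of_lt_of_le (hc v) hd)
    have : (N.card : ℝ) < (d + 1 : ℝ) := lt_of_mul_lt_mul_right hlt (le_of_lt hmin0)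
    have : N.card < d + 1 := by exact_mod_cast this
    omega
  obtain ⟨f, hf⟩ := greedy_aux G' d hdeg Finset.univ
  -- total coloring
  have hcol : G.Colorable ((d + 1) * k) := by
    have C : G.Coloring (Fin k × Fin (d + 1)) := by
      refine SimpleGraph.Coloring.mk (fun v => (c v, f v)) ?_
      intro u v huv h
      by_cases hcc : c u = c v
      · exact hf u (Finset.mem_univ u) v (Finset.mem_univ v) ⟨huv, hcc⟩
          (congrArg Prod.snd h)
      · exact hcc (congrArg Prod.fst h)
    have := C.colorable
    simpa [Fintype.card_prod, Nat.mul_comm] using this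
  exact hcol.chromaticNumber_le
end

section
/- Let (V, w) be a weighted digraph, let w_max : ℝ satisfy w u v ≤ w_max for all u, v, and let d : ℕ satisfy d·w_max < 1. Suppose the underlying undirected graph of (V, w) (with u adjacent to v iff u ≠ v and w u v > 0 or w v u > 0) has maximum degree at most Δ, i.e. for every vertex v the set {u | u ≠ v and (w u v > 0 or w v u > 0)} has at most Δ elements. Then (V, w) admits a valid weighted improper coloring with ⌈Δ/(d+1)⌉ + 1 colors; in particular the weighted improper chromatic number of (V, w) is at most ⌈Δ/(d+1)⌉ + 1. -/
open Finset

namespace WICAux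

variable {V : Type*} [Fintype V] [DecidableEq V]

def Adj (w : V → V → ℝ) (u v : V) : Prop := u ≠ v ∧ (0 < w u v ∨ 0 < w v u)

noncomputable instance (w : V → V → ℝ) (u v : V) : Decidable (Adj w u v) := by
  unfold Adj; infer_instance

lemma adj_symm (w : V → V → ℝ) {u v : V} : Adj w u v ↔ Adj w v u := by
  unfold Adj; rw [ne_comm, or_comm]

lemma adj_irrefl (w : V → V → ℝ) (v : V) : ¬ Adj w v v := fun h => h.1 rfl

noncomputable def Ncnt (w : V → V → ℝ) {k : ℕ} (c : V → Fin k) (v : V) (j : Fin k) : ℕ :=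
  (univ.filter (fun u => Adj w u v ∧ c u = j)).card

lemma Ncnt_eq_sum (w : V → V → ℝ) {k : ℕ} (c : V → Fin k) (v : V) (j : Fin k) :
    Ncnt w c v j = ∑ u : V, if Adj w u v ∧ c u = j then 1 else 0 :=
  Finset.card_filter _ _

noncomputable def Phi (w : V → V → ℝ) {k : ℕ} (c : V → Fin k) : ℕ := ∑ v, Ncnt w c v (c v)

lemma sum_ite_adj (w : V → V → ℝ) {k : ℕ} (c : V → Fin k) (v : V) (j : Fin k) :
    ∑ x ∈ univ.erase v, (if Adj w v x ∧ j = c x then 1 else 0) = Ncnt w c v j := by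
  rw [Ncnt_eq_sum]
  rw [← Finset.sum_erase (univ : Finset V)
    (f := fun u => if Adj w u v ∧ c u = j then 1 else 0) (a := v)
    (by simp [adj_irrefl w v])]
  apply Finset.sum_congr rfl
  intro x _
  congr 1
  rw [eq_iff_iff]
  constructor
  · rintro ⟨h1, h2⟩; exact ⟨adj_symm w |>.mp h1, h2.symm⟩
  · rintro ⟨h1, h2⟩; exact ⟨adj_symm w |>.mp h1, h2.symm⟩

lemma phi_update (w : V → V → ℝ) {k : ℕ} (c : V → Fin k) (v : V) (j : Fin k) :
    Phi w (Function.update c v j) + 2 * Ncnt w c v (c v)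
      = Phi w c + 2 * Ncnt w c v j := by
  set c' := Function.update c v j with hc'
  have hcu : ∀ u, u ≠ v → c' u = c u := fun u h => Function.update_of_ne h _ _
  have hcv : c' v = j := Function.update_self _ _ _
  have hN' : ∀ i, Ncnt w c' v i = Ncnt w c v i := by
    intro i
    unfold Ncnt
    congr 1
    apply Finset.filter_congr
    intro u _
    constructor
    · rintro ⟨h1, h2⟩; exact ⟨h1, by rwa [hcu u h1.1] at h2⟩
    · rintro ⟨h1, h2⟩; exact ⟨h1, by rwa [hcu u h1.1]⟩
  have hx : ∀ x, x ≠ v → Ncnt w c' x (c' x) + (if Adj w v x ∧ c v = c x then 1 else 0)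
      = Ncnt w c x (c x) + (if Adj w v x ∧ j = c x then 1 else 0) := by
    intro x hxv
    rw [hcu x hxv, Ncnt_eq_sum, Ncnt_eq_sum]
    rw [← Finset.sum_erase_add (univ : Finset V)
      (f := fun u => if Adj w u x ∧ c' u = c x then 1 else 0) (Finset.mem_univ v)]
    rw [← Finset.sum_erase_add (univ : Finset V)
      (f := fun u => if Adj w u x ∧ c u = c x then 1 else 0) (Finset.mem_univ v)]
    have hterms : (∑ u ∈ univ.erase v, if Adj w u x ∧ c' u = c x then 1 else 0)
        = ∑ u ∈ univ.erase v, if Adj w u x ∧ c u = c x then 1 else 0 := by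
      apply Finset.sum_congr rfl
      intro u hu
      rw [hcu u (Finset.ne_of_mem_erase hu)]
    rw [hterms, hcv]
    generalize (∑ u ∈ univ.erase v, if Adj w u x ∧ c u = c x then (1:ℕ) else 0) = S
    generalize (if Adj w v x ∧ j = c x then (1:ℕ) else 0) = a
    generalize (if Adj w v x ∧ c v = c x then (1:ℕ) else 0) = b
    omega
  have hsplit' : ∑ x ∈ univ.erase v, Ncnt w c' x (c' x) + Ncnt w c' v (c' v) = Phi w c' :=
    Finset.sum_erase_add _ _ (Finset.mem_univ v)
  have hsplit : ∑ x ∈ univ.erase v, Ncnt w c x (c x) + Ncnt w c v (c v) = Phi w c :=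
    Finset.sum_erase_add _ _ (Finset.mem_univ v)
  have h3 : (∑ x ∈ univ.erase v, Ncnt w c' x (c' x)) + Ncnt w c v (c v)
      = (∑ x ∈ univ.erase v, Ncnt w c x (c x)) + Ncnt w c v j := by
    have hcongr : ∑ x ∈ univ.erase v,
          (Ncnt w c' x (c' x) + (if Adj w v x ∧ c v = c x then 1 else 0))
        = ∑ x ∈ univ.erase v,
          (Ncnt w c x (c x) + (if Adj w v x ∧ j = c x then 1 else 0)) :=
      Finset.sum_congr rfl (fun x hx' => hx x (Finset.ne_of_mem_erase hx'))
    rw [Finset.sum_add_distrib, Finset.sum_add_distrib, sum_ite_adj, sum_ite_adj] at hcongr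
    exact hcongr
  have hv' : Ncnt w c' v (c' v) = Ncnt w c v j := by rw [hcv, hN']
  rw [hv'] at hsplit'
  omega

lemma sum_Ncnt (w : V → V → ℝ) {k : ℕ} (c : V → Fin k) (v : V) :
    ∑ j : Fin k, Ncnt w c v j = (univ.filter (fun u => Adj w u v)).card := by
  simp only [Ncnt_eq_sum]
  rw [Finset.sum_comm, Finset.card_filter]
  apply Finset.sum_congr rfl
  intro u _
  by_cases h : Adj w u v
  · simp [h]
  · simp [h]

end WICAux

theorem weighted_improper_coloring_of_max_degree {V : Type*} [Fintype V] [DecidableEq V]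
    (w : V → V → ℝ)
    (hw0 : ∀ u v, 0 ≤ w u v) (hwd : ∀ v, w v v = 0)
    (wmax : ℝ) (hmax : ∀ u v, w u v ≤ wmax)
    (d : ℕ) (hd : (d : ℝ) * wmax < 1)
    (Δ : ℕ)
    (hdeg : ∀ v : V,
      (Finset.univ.filter (fun u => u ≠ v ∧ (0 < w u v ∨ 0 < w v u))).card ≤ Δ) :
    ∃ c : V → Fin ((Δ + d) / (d + 1) + 1), ValidWIC w c := by
  classical
  set k := (Δ + d) / (d + 1) + 1 with hk
  have hk0 : 0 < k := Nat.succ_pos _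
  obtain ⟨c, -, hmin⟩ := Finset.exists_min_image (univ : Finset (V → Fin k))
    (WICAux.Phi w) ⟨fun _ => ⟨0, hk0⟩, mem_univ _⟩
  have hgood : ∀ v, WICAux.Ncnt w c v (c v) ≤ d := by
    intro v
    by_contra hbad
    push_neg at hbad
    have hsum : ∑ j : Fin k, WICAux.Ncnt w c v j ≤ Δ := by
      rw [WICAux.sum_Ncnt]
      have hcards : (univ.filter (fun u => WICAux.Adj w u v)).card
          = (univ.filter (fun u => u ≠ v ∧ (0 < w u v ∨ 0 < w v u))).card := by
        congr 1
      rw [hcards]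
      exact hdeg v
    have hex : ∃ j : Fin k, WICAux.Ncnt w c v j ≤ d := by
      by_contra h
      push_neg at h
      have h1 : k * (d + 1) ≤ ∑ j : Fin k, WICAux.Ncnt w c v j := by
        calc k * (d + 1) = ∑ _j : Fin k, (d + 1) := by
              simp [Finset.sum_const, mul_comm]
          _ ≤ _ := Finset.sum_le_sum fun j _ => h j
      have h2 : Δ + d < k * (d + 1) := by
        have hdm := Nat.div_add_mod (Δ + d) (d + 1)
        have hml : (Δ + d) % (d + 1) < d + 1 := Nat.mod_lt _ (by omega)
        have : k * (d + 1) = (d + 1) * ((Δ + d) / (d + 1)) + (d + 1) := by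
          rw [hk]; ring
        rw [this]
        omega
      omega
    obtain ⟨j, hj⟩ := hex
    have hupd := WICAux.phi_update w c v j
    have hm := hmin (Function.update c v j) (mem_univ _)
    omega
  refine ⟨c, fun v => ?_⟩
  have hwmax0 : 0 ≤ wmax := (hwd v) ▸ hmax v v
  have hTsub : (univ.filter (fun u => WICAux.Adj w u v ∧ c u = c v))
      ⊆ (univ.filter (fun u => u ≠ v ∧ c u = c v)) := by
    intro u hu
    simp only [mem_filter, mem_univ, true_and] at hu ⊢
    exact ⟨hu.1.1, hu.2⟩
  have hsum_eq : ∑ u ∈ univ.filter (fun u => u ≠ v ∧ c u = c v), w u v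
      = ∑ u ∈ univ.filter (fun u => WICAux.Adj w u v ∧ c u = c v), w u v := by
    refine (Finset.sum_subset hTsub ?_).symm
    intro u hu hnot
    simp only [mem_filter, mem_univ, true_and] at hu hnot
    by_contra hne
    have hpos : 0 < w u v := lt_of_le_of_ne (hw0 u v) (Ne.symm hne)
    exact hnot ⟨⟨hu.1, Or.inl hpos⟩, hu.2⟩
  rw [hsum_eq]
  have hcard : (univ.filter (fun u => WICAux.Adj w u v ∧ c u = c v)).card ≤ d := hgood v
  calc ∑ u ∈ univ.filter (fun u => WICAux.Adj w u v ∧ c u = c v), w u v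
      ≤ (univ.filter (fun u => WICAux.Adj w u v ∧ c u = c v)).card • wmax :=
        Finset.sum_le_card_nsmul _ _ _ (fun u _ => hmax u v)
    _ = ((univ.filter (fun u => WICAux.Adj w u v ∧ c u = c v)).card : ℝ) * wmax := by
        rw [nsmul_eq_mul]
    _ ≤ (d : ℝ) * wmax := by
        apply mul_le_mul_of_nonneg_right _ hwmax0
        exact_mod_cast hcard
    _ < 1 := hd
end

section
/- Let G be a finite simple graph in which every vertex has degree at most Δ, and let d be a natural number. Then G admits a d-defective coloring with ⌈Δ/(d+1)⌉ + 1 colors, i.e. there exists a coloring c : V → Fin (⌈Δ/(d+1)⌉ + 1) such that every vertex v has at most d neighbors u with c u = c v. -/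
open Finset

namespace DefectiveAux

variable {V : Type*} [Fintype V] [DecidableEq V] (G : SimpleGraph V) [DecidableRel G.Adj]
variable {k : ℕ}

/-- Number of ordered monochromatic adjacent pairs. -/
def mono (c : V → Fin k) : ℕ :=
  (Finset.univ.filter (fun p : V × V => G.Adj p.1 p.2 ∧ c p.1 = c p.2)).card

lemma card_side (c : V → Fin k) (v : V) :
    (Finset.univ.filter
        (fun p : V × V => (G.Adj p.1 p.2 ∧ c p.1 = c p.2) ∧ (p.1 = v ∨ p.2 = v))).card
      = 2 * ((G.neighborFinset v).filter (fun u => c u = c v)).card := by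
  have hsplit : (Finset.univ.filter
        (fun p : V × V => (G.Adj p.1 p.2 ∧ c p.1 = c p.2) ∧ (p.1 = v ∨ p.2 = v)))
      = ((G.neighborFinset v).filter (fun u => c u = c v)).image (fun u => (v, u))
        ∪ ((G.neighborFinset v).filter (fun u => c u = c v)).image (fun u => (u, v)) := by
    ext ⟨a, b⟩
    simp only [mem_filter, mem_union, mem_image, mem_univ, true_and,
      SimpleGraph.mem_neighborFinset, Prod.mk.injEq]
    constructor
    · rintro ⟨⟨hadj, heq⟩, h | h⟩
      · subst h
        exact Or.inl ⟨b, ⟨hadj, heq.symm⟩, rfl, rfl⟩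
      · subst h
        exact Or.inr ⟨a, ⟨G.adj_symm hadj, heq⟩, rfl, rfl⟩
    · rintro (⟨u, ⟨hadj, heq⟩, rfl, rfl⟩ | ⟨u, ⟨hadj, heq⟩, rfl, rfl⟩)
      · exact ⟨⟨hadj, heq.symm⟩, Or.inl rfl⟩
      · exact ⟨⟨G.adj_symm hadj, heq⟩, Or.inr rfl⟩
  rw [hsplit, Finset.card_union_of_disjoint, Finset.card_image_of_injective,
    Finset.card_image_of_injective, two_mul]
  · intro a b hab; exact (Prod.mk.injEq _ _ _ _ ▸ hab).1
  · intro a b hab; exact (Prod.mk.injEq _ _ _ _ ▸ hab).2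
  · rw [Finset.disjoint_left]
    rintro ⟨a, b⟩ h1 h2
    simp only [mem_image, mem_filter, SimpleGraph.mem_neighborFinset, Prod.mk.injEq] at h1 h2
    obtain ⟨u, ⟨hu, -⟩, rfl, rfl⟩ := h1
    obtain ⟨w, ⟨hw, -⟩, rfl, h⟩ := h2
    exact G.loopless.irrefl _ (h ▸ hu)

lemma mono_split (c : V → Fin k) (v : V) :
    mono G c = (Finset.univ.filter
        (fun p : V × V => (G.Adj p.1 p.2 ∧ c p.1 = c p.2) ∧ ¬(p.1 = v ∨ p.2 = v))).card
      + 2 * ((G.neighborFinset v).filter (fun u => c u = c v)).card := by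
  classical
  rw [mono, ← Finset.card_filter_add_card_filter_not
    (s := Finset.univ.filter (fun p : V × V => G.Adj p.1 p.2 ∧ c p.1 = c p.2))
    (p := fun p : V × V => p.1 = v ∨ p.2 = v),
    Finset.filter_filter, Finset.filter_filter, card_side]
  omega

end DefectiveAux

open DefectiveAux

theorem defective_coloring_of_max_degree {V : Type*} [Fintype V] [DecidableEq V]
    (G : SimpleGraph V) [DecidableRel G.Adj]
    (Δ d : ℕ) (hdeg : ∀ v : V, G.degree v ≤ Δ) :
    ∃ c : V → Fin ((Δ + d) / (d + 1) + 1),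
      ∀ v : V, ((G.neighborFinset v).filter (fun u => c u = c v)).card ≤ d := by
  set K := (Δ + d) / (d + 1) + 1 with hK
  obtain ⟨c, -, hmin⟩ := Finset.exists_min_image (Finset.univ : Finset (V → Fin K))
    (mono G) ⟨fun _ => 0, Finset.mem_univ _⟩
  refine ⟨c, fun v => ?_⟩
  by_contra hbad
  push_neg at hbad
  set n : Fin K → ℕ := fun j => ((G.neighborFinset v).filter (fun u => c u = j)).card with hn
  -- sum of fibers is the degree
  have hsum : ∑ j : Fin K, n j = G.degree v := by
    rw [← SimpleGraph.card_neighborFinset_eq_degree]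
    exact (Finset.card_eq_sum_card_fiberwise (f := c) (t := Finset.univ)
      (fun x _ => Finset.mem_univ _)).symm
  -- pigeonhole: some color has at most d neighbors
  have hpig : ∃ j : Fin K, n j ≤ d := by
    by_contra hall
    push_neg at hall
    have h1 : K * (d + 1) ≤ ∑ j : Fin K, n j := by
      calc K * (d + 1) = ∑ _j : Fin K, (d + 1) := by
            simp [Finset.sum_const, Fintype.card_fin, Nat.mul_comm]
        _ ≤ ∑ j : Fin K, n j := Finset.sum_le_sum (fun j _ => hall j)
    have h2 : Δ + d < K * (d + 1) := by
      have h3 := Nat.div_add_mod (Δ + d) (d + 1)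
      have h4 := Nat.mod_lt (Δ + d) (show 0 < d + 1 by omega)
      have : K * (d + 1) = (Δ + d) / (d + 1) * (d + 1) + (d + 1) := by rw [hK, Nat.add_mul, Nat.one_mul]
      have hc2 : (Δ + d) / (d + 1) * (d + 1) = (d + 1) * ((Δ + d) / (d + 1)) := Nat.mul_comm _ _
      omega
    have := hdeg v
    have hc : (Δ + d) / (d + 1) * (d + 1) = (d + 1) * ((Δ + d) / (d + 1)) := Nat.mul_comm _ _
    omega
  obtain ⟨j, hj⟩ := hpig
  have hjd : d < n (c v) := hbad
  -- recolor v with color j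
  set c' : V → Fin K := Function.update c v j with hc'
  have hoff : (Finset.univ.filter
        (fun p : V × V => (G.Adj p.1 p.2 ∧ c' p.1 = c' p.2) ∧ ¬(p.1 = v ∨ p.2 = v)))
      = (Finset.univ.filter
        (fun p : V × V => (G.Adj p.1 p.2 ∧ c p.1 = c p.2) ∧ ¬(p.1 = v ∨ p.2 = v))) := by
    ext ⟨a, b⟩
    simp only [mem_filter, mem_univ, true_and]
    constructor
    · rintro ⟨⟨hadj, heq⟩, hne⟩
      push_neg at hne
      rw [hc', Function.update_of_ne hne.1, Function.update_of_ne hne.2] at heq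
      exact ⟨⟨hadj, heq⟩, by push_neg; exact hne⟩
    · rintro ⟨⟨hadj, heq⟩, hne⟩
      push_neg at hne
      refine ⟨⟨hadj, ?_⟩, by push_neg; exact hne⟩
      rw [hc', Function.update_of_ne hne.1, Function.update_of_ne hne.2]
      exact heq
  have hfib : ((G.neighborFinset v).filter (fun u => c' u = c' v)).card = n j := by
    rw [hn]
    congr 1
    apply Finset.filter_congr
    intro u hu
    have huv : u ≠ v := by
      intro h; subst h
      exact G.loopless.irrefl _ (SimpleGraph.mem_neighborFinset _ _ _ |>.mp hu)
    simp [hc', Function.update_of_ne huv, Function.update_self]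
  have hlt : mono G c' < mono G c := by
    rw [mono_split G c v, mono_split G c' v, hoff, hfib]
    have : ((G.neighborFinset v).filter (fun u => c u = c v)).card = n (c v) := rfl
    omega
  exact absurd (hmin c' (Finset.mem_univ _)) (by omega)
end

section
/- Let (V, w) be a weighted digraph and let W = ∑_{u, v} w u v be the sum of all edge weights. Then (V, w) admits a valid weighted improper coloring with 2·⌊√(2W)⌋ + 1 colors, where ⌊√(2W)⌋ is the natural-number floor of the real square root of 2W; in particular the weighted improper chromatic number of (V, w) is at most 2·⌊√(2W)⌋ + 1. -/
open Finset

lemma local_search {V : Type*} [Fintype V] [DecidableEq V] (w : V → V → ℝ)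
    (k : ℕ) (hk : 0 < k) (P : V → Prop) [DecidablePred P] :
    ∃ c : V → Fin k, ∀ v, P v → (k : ℝ) *
      (∑ u ∈ univ.filter (fun u => u ≠ v ∧ P u ∧ c u = c v), (w u v + w v u)) ≤
      ∑ u ∈ univ.filter (fun u => u ≠ v ∧ P u), (w u v + w v u) := by
  classical
  haveI : NeZero k := ⟨hk.ne'⟩
  set M : (V → Fin k) → ℝ := fun c => ∑ u : V, ∑ u' : V,
    (if u ≠ u' ∧ P u ∧ P u' ∧ c u = c u' then w u u' else 0) with hM
  obtain ⟨c, -, hc⟩ := Finset.exists_min_image (univ : Finset (V → Fin k)) M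
    ⟨fun _ => 0, mem_univ _⟩
  refine ⟨c, fun v hv => ?_⟩
  set T : Fin k → ℝ := fun i => ∑ u : V,
    (if u ≠ v ∧ P u ∧ c u = i then (w u v + w v u) else 0) with hT
  -- decomposition of M for any coloring c' agreeing with c off v:
  have decomp : ∀ (c' : V → Fin k), (∀ u, u ≠ v → c' u = c u) →
      M c' = (∑ u ∈ univ.erase v, ∑ u' ∈ univ.erase v,
        (if u ≠ u' ∧ P u ∧ P u' ∧ c u = c u' then w u u' else 0))
        + (∑ u : V, (if u ≠ v ∧ P u ∧ c u = c' v then (w u v + w v u) else 0)) := by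
    intro c' hagree
    have hrow : ∀ u : V, (∑ u' : V, (if u ≠ u' ∧ P u ∧ P u' ∧ c' u = c' u' then w u u' else 0))
        = (if u ≠ v ∧ P u ∧ c u = c' v then w u v else 0)
          + ∑ u' ∈ univ.erase v, (if u ≠ u' ∧ P u ∧ P u' ∧ c' u = c' u' then w u u' else 0) := by
      intro u
      rw [← Finset.sum_erase_add _ _ (mem_univ v), add_comm]
      congr 1
      by_cases huv : u = v
      · subst huv; simp
      · simp only [huv, hv, hagree u huv]
        by_cases h : P u ∧ c u = c' v
        · simp [h.1, h.2, huv, hv]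
        · push_neg at h
          by_cases hPu : P u
          · simp [hPu, h hPu, huv]
          · simp [hPu]
    have step1 : M c' = ∑ u : V, ((if u ≠ v ∧ P u ∧ c u = c' v then w u v else 0)
        + ∑ u' ∈ univ.erase v, (if u ≠ u' ∧ P u ∧ P u' ∧ c' u = c' u' then w u u' else 0)) := by
      simp only [hM]
      exact Finset.sum_congr rfl fun u _ => hrow u
    rw [step1, Finset.sum_add_distrib]
    rw [← Finset.sum_erase_add _
      (fun u => ∑ u' ∈ univ.erase v, (if u ≠ u' ∧ P u ∧ P u' ∧ c' u = c' u' then w u u' else 0))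
      (mem_univ v)]
    -- the u = v term of the second sum
    have hvterm : ∑ u' ∈ univ.erase v, (if v ≠ u' ∧ P v ∧ P u' ∧ c' v = c' u' then w v u' else 0)
        = ∑ u' : V, (if u' ≠ v ∧ P u' ∧ c u' = c' v then w v u' else 0) := by
      rw [← Finset.sum_erase_add _ (fun u' => if u' ≠ v ∧ P u' ∧ c u' = c' v then w v u' else 0)
        (mem_univ v)]
      simp only [ne_eq, not_true_eq_false, false_and, if_false, add_zero]
      refine Finset.sum_congr rfl fun u' hu' => ?_
      have hu'v : u' ≠ v := by simpa using (Finset.mem_erase.mp hu').1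
      simp only [hu'v, Ne.symm hu'v, hv, hagree u' hu'v, ne_eq, not_false_eq_true, true_and]
      by_cases hPu' : P u'
      · simp only [hPu', true_and]
        rcases eq_or_ne (c u') (c' v) with h | h
        · rw [if_pos h.symm, if_pos h]
        · rw [if_neg (fun hh => h hh.symm), if_neg h]
      · simp [hPu']
    have hrest : ∀ u ∈ univ.erase v,
        (∑ u' ∈ univ.erase v, (if u ≠ u' ∧ P u ∧ P u' ∧ c' u = c' u' then w u u' else 0))
        = ∑ u' ∈ univ.erase v, (if u ≠ u' ∧ P u ∧ P u' ∧ c u = c u' then w u u' else 0) := by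
      intro u hu
      refine Finset.sum_congr rfl fun u' hu' => ?_
      rw [hagree u (by simpa using (Finset.mem_erase.mp hu).1),
        hagree u' (by simpa using (Finset.mem_erase.mp hu').1)]
    rw [Finset.sum_congr rfl hrest, hvterm]
    have merge : ∑ u : V, (if u ≠ v ∧ P u ∧ c u = c' v then (w u v + w v u) else 0)
        = (∑ u : V, (if u ≠ v ∧ P u ∧ c u = c' v then w u v else 0))
          + ∑ u : V, (if u ≠ v ∧ P u ∧ c u = c' v then w v u else 0) := by
      rw [← Finset.sum_add_distrib]
      refine Finset.sum_congr rfl fun u _ => ?_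
      by_cases h : u ≠ v ∧ P u ∧ c u = c' v <;> simp [h]
    rw [merge]
    ring
  have hkey : ∀ j : Fin k, T (c v) ≤ T j := by
    intro j
    have h1 : M c ≤ M (Function.update c v j) := hc _ (mem_univ _)
    have e1 := decomp c (fun _ _ => rfl)
    have e2 := decomp (Function.update c v j) (fun u hu => Function.update_of_ne hu _ _)
    rw [Function.update_self] at e2
    rw [e1, e2] at h1
    simpa [hT] using h1
  have sumT : ∑ j : Fin k, T j = ∑ u ∈ univ.filter (fun u => u ≠ v ∧ P u), (w u v + w v u) := by
    simp only [hT]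
    rw [Finset.sum_comm, Finset.sum_filter]
    refine Finset.sum_congr rfl fun u _ => ?_
    by_cases h : u ≠ v ∧ P u
    · simp only [h.1, h.2, ne_eq, not_false_eq_true, true_and]
      simp [Finset.sum_ite_eq]
    · push_neg at h
      by_cases huv : u ≠ v
      · simp [huv, h huv]
      · simp [huv]
  have hTfilter : T (c v) = ∑ u ∈ univ.filter (fun u => u ≠ v ∧ P u ∧ c u = c v),
      (w u v + w v u) := by
    rw [Finset.sum_filter]
  calc (k:ℝ) * (∑ u ∈ univ.filter (fun u => u ≠ v ∧ P u ∧ c u = c v), (w u v + w v u))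
      = ∑ _j : Fin k, T (c v) := by rw [hTfilter, Finset.sum_const, card_univ,
        Fintype.card_fin, nsmul_eq_mul]
    _ ≤ ∑ j : Fin k, T j := Finset.sum_le_sum fun j _ => hkey j
    _ = _ := sumT

theorem weighted_improper_coloring_of_total_weight {V : Type*} [Fintype V] [DecidableEq V]
    (w : V → V → ℝ)
    (hw0 : ∀ u v, 0 ≤ w u v) (hwd : ∀ v, w v v = 0)
    (W : ℝ) (hW : W = ∑ u : V, ∑ v : V, w u v) :
    ∃ c : V → Fin (2 * ⌊Real.sqrt (2 * W)⌋₊ + 1), ValidWIC w c := by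
  classical
  set t := ⌊Real.sqrt (2 * W)⌋₊ with ht
  have hW0 : 0 ≤ W := hW ▸ Finset.sum_nonneg fun u _ => Finset.sum_nonneg fun v _ => hw0 u v
  have h2W : 2 * W < ((t:ℝ) + 1)^2 := by
    have h1 : Real.sqrt (2*W) < (t:ℝ) + 1 := by
      have := Nat.lt_floor_add_one (Real.sqrt (2*W))
      push_cast at this ⊢
      exact this
    nlinarith [Real.sq_sqrt (by linarith : (0:ℝ) ≤ 2*W), Real.sqrt_nonneg (2*W)]
  set d : V → ℝ := fun v => ∑ u : V, (w u v + w v u) with hd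
  have hd0 : ∀ v, 0 ≤ d v := fun v =>
    Finset.sum_nonneg fun u _ => add_nonneg (hw0 u v) (hw0 v u)
  have hdsum : ∑ v : V, d v = 2 * W := by
    simp only [hd]
    rw [hW]
    rw [Finset.sum_comm]
    simp only [Finset.sum_add_distrib]
    rw [Finset.sum_comm (f := fun u v => w v u)]
    ring
  set H : Finset V := univ.filter (fun v => (t:ℝ) + 1 ≤ d v) with hH
  have hHcard : H.card ≤ t := by
    have h1 : ((t:ℝ) + 1) * H.card ≤ ∑ v ∈ H, d v := by
      have h0 : ∑ _v ∈ H, ((t:ℝ)+1) ≤ ∑ v ∈ H, d v :=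
        Finset.sum_le_sum fun v hv => (Finset.mem_filter.mp hv).2
      rw [Finset.sum_const, nsmul_eq_mul, mul_comm] at h0; exact h0
    have h2 : ∑ v ∈ H, d v ≤ ∑ v : V, d v :=
      Finset.sum_le_sum_of_subset_of_nonneg (Finset.subset_univ H)
        (fun v _ _ => hd0 v)
    have h3 : ((H.card : ℝ)) < (t:ℝ) + 1 := by
      nlinarith [hdsum, h2W]
    exact_mod_cast Nat.lt_succ_iff.mp (by exact_mod_cast h3)
  obtain ⟨c₀, hc₀⟩ := local_search w (t+1) (Nat.succ_pos t) (fun v => v ∉ H)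
  -- light vertex bound
  have hlight : ∀ v, v ∉ H →
      ∑ u ∈ univ.filter (fun u => u ≠ v ∧ u ∉ H ∧ c₀ u = c₀ v), (w u v + w v u) < 1 := by
    intro v hvH
    have hdv : d v < (t:ℝ) + 1 := by
      by_contra h
      exact hvH (Finset.mem_filter.mpr ⟨mem_univ v, not_lt.mp h⟩)
    have h1 := hc₀ v hvH
    have h2 : ∑ u ∈ univ.filter (fun u => u ≠ v ∧ u ∉ H), (w u v + w v u) ≤ d v := by
      simp only [hd]
      exact Finset.sum_le_sum_of_subset_of_nonneg (Finset.filter_subset _ _)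
        (fun u _ _ => add_nonneg (hw0 u v) (hw0 v u))
    have hk : (0:ℝ) < (t:ℝ) + 1 := by positivity
    push_cast at h1
    nlinarith
  -- build the final coloring
  have hcast : ∀ (x : H), ((H.equivFin x : ℕ)) < 2 * t + 1 :=
    fun x => lt_of_lt_of_le (Fin.is_lt _) (le_trans hHcard (by omega))
  set c : V → Fin (2 * t + 1) := fun v =>
    if h : v ∈ H then ⟨(H.equivFin ⟨v, h⟩ : ℕ), hcast ⟨v, h⟩⟩
    else ⟨t + (c₀ v : ℕ), by have := (c₀ v).is_lt; omega⟩ with hc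
  refine ⟨c, fun v => ?_⟩
  by_cases hvH : v ∈ H
  · have hempty : univ.filter (fun u => u ≠ v ∧ c u = c v) = ∅ := by
      rw [Finset.filter_eq_empty_iff]
      rintro u - ⟨huv, hcu⟩
      by_cases huH : u ∈ H
      · have : (⟨(H.equivFin ⟨u, huH⟩ : ℕ), hcast _⟩ : Fin (2*t+1))
            = ⟨(H.equivFin ⟨v, hvH⟩ : ℕ), hcast _⟩ := by
          simpa [hc, huH, hvH] using hcu
        have hval : (H.equivFin ⟨u, huH⟩ : ℕ) = (H.equivFin ⟨v, hvH⟩ : ℕ) :=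
          congrArg (fun x : Fin (2*t+1) => x.val) this
        have : (⟨u, huH⟩ : H) = ⟨v, hvH⟩ := H.equivFin.injective (Fin.ext hval)
        exact huv (congrArg Subtype.val this)
      · have hval : t + (c₀ u : ℕ) = (H.equivFin ⟨v, hvH⟩ : ℕ) := by
          have h' := hcu
          simp only [hc, dif_pos hvH, dif_neg huH] at h'
          exact congrArg (fun x : Fin (2*t+1) => x.val) h'
        have : (H.equivFin ⟨v, hvH⟩ : ℕ) < H.card := Fin.is_lt _
        omega
    rw [hempty]
    simp
  · have hsub : univ.filter (fun u => u ≠ v ∧ c u = c v) ⊆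
        univ.filter (fun u => u ≠ v ∧ u ∉ H ∧ c₀ u = c₀ v) := by
      intro u hu
      obtain ⟨-, huv, hcu⟩ := Finset.mem_filter.mp hu
      refine Finset.mem_filter.mpr ⟨mem_univ u, huv, ?_, ?_⟩
      · intro huH
        have hval : (H.equivFin ⟨u, huH⟩ : ℕ) = t + (c₀ v : ℕ) := by
          simp only [hc, dif_pos huH, dif_neg hvH] at hcu
          exact congrArg (fun x : Fin (2*t+1) => x.val) hcu
        have : (H.equivFin ⟨u, huH⟩ : ℕ) < H.card := Fin.is_lt _
        omega
      · by_cases huH : u ∈ H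
        · exfalso
          have hval : (H.equivFin ⟨u, huH⟩ : ℕ) = t + (c₀ v : ℕ) := by
            simp only [hc, dif_pos huH, dif_neg hvH] at hcu
            exact congrArg (fun x : Fin (2*t+1) => x.val) hcu
          have : (H.equivFin ⟨u, huH⟩ : ℕ) < H.card := Fin.is_lt _
          omega
        · have hval : t + (c₀ u : ℕ) = t + (c₀ v : ℕ) := by
            simp only [hc, dif_neg huH, dif_neg hvH] at hcu
            exact congrArg (fun x : Fin (2*t+1) => x.val) hcu
          exact Fin.ext (by omega)
    calc ∑ u ∈ univ.filter (fun u => u ≠ v ∧ c u = c v), w u v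
        ≤ ∑ u ∈ univ.filter (fun u => u ≠ v ∧ u ∉ H ∧ c₀ u = c₀ v), w u v :=
          Finset.sum_le_sum_of_subset_of_nonneg hsub (fun u _ _ => hw0 u v)
      _ ≤ ∑ u ∈ univ.filter (fun u => u ≠ v ∧ u ∉ H ∧ c₀ u = c₀ v), (w u v + w v u) :=
          Finset.sum_le_sum fun u _ => by linarith [hw0 v u]
      _ < 1 := hlight v hvH
end

section
/- Let V be a finite vertex type with an arc relation A : V → V → Prop, let ι be a finite index type, let T be a simple graph on ι that is a tree (connected and acyclic), and let X : ι → Set V be bags forming a tree decomposition, i.e.: (1) every vertex v ∈ V lies in some bag X i; (2) for every arc A u v there is a bag X i containing both u and v; (3) for every vertex v, the subgraph of T induced on {i | v ∈ X i} is connected. For each i define V_i = X i ∪ {u | ∃ x ∈ X i, A u x} (the vertices of X i together with all their in-neighbors). Then for every vertex v ∈ V, the subgraph of T induced on {i | v ∈ V_i} is connected. -/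
theorem induced_subtree_of_bags_with_inneighbors
    {V : Type*} [Fintype V] (A : V → V → Prop)
    {ι : Type*} [Fintype ι] (T : SimpleGraph ι) (hT : T.IsTree)
    (X : ι → Set V)
    (hcover : ∀ v : V, ∃ i, v ∈ X i)
    (hedge : ∀ u v : V, A u v → ∃ i, u ∈ X i ∧ v ∈ X i)
    (hconn : ∀ v : V, (T.induce {i | v ∈ X i}).Connected) :
    ∀ v : V, (T.induce {i | v ∈ X i ∪ {u | ∃ x ∈ X i, A u x}}).Connected := by
  intro v
  obtain ⟨i₀, hi₀⟩ := hcover v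
  have hsub : {i | v ∈ X i} ⊆ {i | v ∈ X i ∪ {u | ∃ x ∈ X i, A u x}} :=
    fun i hi => Or.inl hi
  apply T.induce_connected_of_patches i₀ (hsub hi₀)
  intro j hj
  rcases hj with hj | ⟨x, hxj, hAx⟩
  · refine ⟨{i | v ∈ X i}, hsub, hi₀, hj, ?_⟩
    exact (hconn v).preconnected _ _
  · obtain ⟨k, hvk, hxk⟩ := hedge v x hAx
    refine ⟨{i | v ∈ X i} ∪ {i | x ∈ X i}, ?_, Or.inl hi₀, Or.inr hxj, ?_⟩
    · rintro i (hi | hi)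
      · exact hsub hi
      · exact Or.inr ⟨x, hi, hAx⟩
    · have hc : (T.induce ({i | v ∈ X i} ∪ {i | x ∈ X i})).Connected :=
        SimpleGraph.induce_union_connected (hconn v).preconnected (hconn x).preconnected ⟨k, hvk, hxk⟩
      exact hc.preconnected _ _
end

section
/- Consider the vertex set V = ZMod 5 × Bool with the symmetric weight function w defined by: w((i,b),(i+1,b)) = w((i+1,b),(i,b)) = 1 for every i : ZMod 5 and b : Bool (the two 5-cycles); w((i,false),(i,true)) = w((i,true),(i,false)) = 1/2 for every i : ZMod 5 (the spokes); and all other weights 0. Then (V, w) admits a valid weighted improper 3-coloring but no valid weighted improper 2-coloring; in particular its weighted improper chromatic number equals 3. -/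
open Finset

/-- Twice the weight function, as a natural number. -/
def Wn (p q : ZMod 5 × Bool) : ℕ :=
  if p.2 = q.2 ∧ (q.1 = p.1 + 1 ∨ p.1 = q.1 + 1) then 2
  else if p.1 = q.1 ∧ p.2 ≠ q.2 then 1 else 0

/-- The explicit 3-coloring. -/
def c3 : ZMod 5 × Bool → Fin 3 := fun p => ![0,1,0,1,2] ⟨p.1.val, p.1.val_lt⟩

lemma c3_valid :
    ∀ v, (∑ u ∈ Finset.univ.filter (fun u => u ≠ v ∧ c3 u = c3 v), Wn u v) < 2 := by
  decide

theorem pentagonal_prism_chromatic_three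
    (w : ZMod 5 × Bool → ZMod 5 × Bool → ℝ)
    (hcycle : ∀ (i : ZMod 5) (b : Bool),
      w (i, b) (i + 1, b) = 1 ∧ w (i + 1, b) (i, b) = 1)
    (hspoke : ∀ i : ZMod 5,
      w (i, false) (i, true) = 1 / 2 ∧ w (i, true) (i, false) = 1 / 2)
    (hzero : ∀ p q : ZMod 5 × Bool,
      ¬(p.2 = q.2 ∧ (q.1 = p.1 + 1 ∨ p.1 = q.1 + 1)) →
      ¬(p.1 = q.1 ∧ p.2 ≠ q.2) → w p q = 0) :
    (∃ c : ZMod 5 × Bool → Fin 3, ValidWIC w c) ∧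
      ¬(∃ c : ZMod 5 × Bool → Fin 2, ValidWIC w c) := by
  -- First: `w` agrees with `Wn / 2`.
  have hw : ∀ p q : ZMod 5 × Bool, w p q = (Wn p q : ℝ) / 2 := by
    rintro ⟨i, b⟩ ⟨j, c⟩
    by_cases h1 : b = c ∧ (j = i + 1 ∨ i = j + 1)
    · obtain ⟨hb, h | h⟩ := h1
      · subst hb; subst h
        rw [show Wn (i, b) (i + 1, b) = 2 by simp [Wn], (hcycle i b).1]; norm_num
      · subst hb; subst h
        rw [show Wn (j + 1, b) (j, b) = 2 by simp [Wn], (hcycle j b).2]; norm_num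
    · by_cases h2 : i = j ∧ b ≠ c
      · obtain ⟨hij, hbc⟩ := h2
        subst hij
        have h3 : Wn (i, b) (i, c) = 1 := by
          simp only [Wn]
          rw [if_neg (by simpa using h1)]
          simp [hbc]
        rw [h3, Nat.cast_one]
        cases b <;> cases c
        · exact absurd rfl hbc
        · exact (hspoke i).1
        · exact (hspoke i).2
        · exact absurd rfl hbc
      · have h3 : Wn (i, b) (j, c) = 0 := by
          simp only [Wn]
          rw [if_neg (by simpa using h1), if_neg (by simpa using h2)]
        rw [hzero (i, b) (j, c) (by simpa using h1) (by simpa using h2), h3]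
        norm_num
  have hnn : ∀ p q : ZMod 5 × Bool, 0 ≤ w p q := by
    intro p q
    rw [hw]
    positivity
  constructor
  · -- existence of a valid 3-coloring
    refine ⟨c3, fun v => ?_⟩
    have hsum : ∑ u ∈ Finset.univ.filter (fun u => u ≠ v ∧ c3 u = c3 v), w u v
        = ((∑ u ∈ Finset.univ.filter (fun u => u ≠ v ∧ c3 u = c3 v), Wn u v : ℕ) : ℝ) / 2 :=
      calc ∑ u ∈ Finset.univ.filter (fun u => u ≠ v ∧ c3 u = c3 v), w u v
          = ∑ u ∈ Finset.univ.filter (fun u => u ≠ v ∧ c3 u = c3 v), ((Wn u v : ℝ) / 2) :=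
            Finset.sum_congr rfl fun u _ => hw u v
        _ = (∑ u ∈ Finset.univ.filter (fun u => u ≠ v ∧ c3 u = c3 v), (Wn u v : ℝ)) / 2 := by
            rw [Finset.sum_div]
        _ = _ := by rw [Nat.cast_sum]
    rw [hsum]
    have h2 := c3_valid v
    have : ((∑ u ∈ Finset.univ.filter (fun u => u ≠ v ∧ c3 u = c3 v), Wn u v : ℕ) : ℝ) < 2 := by
      exact_mod_cast h2
    linarith
  · -- no valid 2-coloring
    rintro ⟨c, hc⟩
    -- there is a monochromatic edge on the outer cycle
    have key : ∃ i : ZMod 5, c (i, false) = c (i + 1, false) := by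
      by_contra h
      push_neg at h
      have hval : ∀ i : ZMod 5, (c (i, false)).val ≠ (c (i + 1, false)).val :=
        fun i he => h i (Fin.ext he)
      have h0 := hval 0
      have h1 := hval 1
      have h2 := hval 2
      have h3 := hval 3
      have h4 := hval 4
      rw [show (0 : ZMod 5) + 1 = 1 by decide] at h0
      rw [show (1 : ZMod 5) + 1 = 2 by decide] at h1
      rw [show (2 : ZMod 5) + 1 = 3 by decide] at h2
      rw [show (3 : ZMod 5) + 1 = 4 by decide] at h3
      rw [show (4 : ZMod 5) + 1 = 0 by decide] at h4
      have b0 := (c ((0 : ZMod 5), false)).isLt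
      have b1 := (c ((1 : ZMod 5), false)).isLt
      have b2 := (c ((2 : ZMod 5), false)).isLt
      have b3 := (c ((3 : ZMod 5), false)).isLt
      have b4 := (c ((4 : ZMod 5), false)).isLt
      omega
    obtain ⟨i, hi⟩ := key
    have hne : (i, false) ≠ (i + 1, false) := by
      intro h
      have : i = i + 1 := congrArg Prod.fst h
      exact absurd (left_eq_add.mp this) (by decide)
    have hmem : (i, false) ∈ Finset.univ.filter
        (fun u => u ≠ (i + 1, false) ∧ c u = c (i + 1, false)) := by
      simp [hne, hi]
    have hle : w (i, false) (i + 1, false) ≤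
        ∑ u ∈ Finset.univ.filter (fun u => u ≠ (i + 1, false) ∧ c u = c (i + 1, false)),
          w u (i + 1, false) :=
      Finset.single_le_sum (f := fun u => w u (i + 1, false)) (fun u _ => hnn u _) hmem
    rw [(hcycle i false).1] at hle
    have := hc (i + 1, false)
    linarith
end
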